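/- For every real z with 0 < z < 1, the series sum over k≥1 of z^(2k)/((2k-1)(2k)^3(2k+1)) equals -(1/4)((1-z)²/z)·ln(1-z) + (1/4)((1+z)²/z)·ln(1+z) - (1/8)Li₃(z²) - 1/2. -/

import Mathlib

noncomputable def Li3 (x : ℝ) : ℝ := ∑' n : ℕ, x ^ (n + 1) / ((n : ℝ) + 1) ^ 3

theorem stmt_8 (z : ℝ) (h0 : 0 < z) (h1 : z < 1) :
    ∑' k : ℕ, z ^ (2 * k + 2) / ((2 * (k : ℝ) + 1) * (2 * k + 2) ^ 3 * (2 * k + 3)) =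
      -(1 / 4) * ((1 - z) ^ 2 / z) * Real.log (1 - z)
        + (1 / 4) * ((1 + z) ^ 2 / z) * Real.log (1 + z)
        - (1 / 8) * Li3 (z ^ 2) - 1 / 2 := by
  have hz : |z| < 1 := by rw [abs_of_pos h0]; exact h1
  have hz2 : |z ^ 2| < 1 := by
    rw [abs_of_pos (by positivity)]
    nlinarith
  have hzne : z ≠ 0 := ne_of_gt h0
  set a := Real.log (1 - z) with ha
  set b := Real.log (1 + z) with hb
  -- odd series (artanh)
  have hodd : HasSum (fun k : ℕ => z ^ (2 * k + 1) / (2 * (k : ℝ) + 1)) ((b - a) / 2) := by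
    have := (Real.hasSum_log_sub_log_of_abs_lt_one hz).div_const 2
    convert this using 2 with k
    · rfl
    ring
  -- A: z^(2k+2)/(2k+1)
  have hA : HasSum (fun k : ℕ => z ^ (2 * k + 2) / (2 * (k : ℝ) + 1)) (z * ((b - a) / 2)) := by
    have := hodd.mul_left z
    convert this using 2 with k
    · rfl
    ring
  -- B: z^(2k+2)/(2k+2)
  have hB : HasSum (fun k : ℕ => z ^ (2 * k + 2) / (2 * (k : ℝ) + 2)) (-(Real.log (1 - z ^ 2)) / 2) := by
    have := (Real.hasSum_pow_div_log_of_abs_lt_one hz2).div_const 2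
    convert this using 2 with k
    · rfl
    have hk : ((k : ℝ) + 1) ≠ 0 := by positivity
    rw [← pow_mul]
    field_simp
    ring
  -- g and Li3
  have hg : Summable (fun n : ℕ => (z ^ 2) ^ (n + 1) / ((n : ℝ) + 1) ^ 3) := by
    refine Summable.of_nonneg_of_le (fun n => by positivity) (fun n => ?_)
      (summable_geometric_of_lt_one (abs_nonneg _) hz2)
    rw [abs_of_nonneg (sq_nonneg z)]
    have hz2le : z ^ 2 ≤ 1 := by nlinarith
    have h1 : (z ^ 2) ^ (n + 1) / ((n : ℝ) + 1) ^ 3 ≤ (z ^ 2) ^ (n + 1) := by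
      apply div_le_self (by positivity)
      have h : (1 : ℝ) ≤ (n : ℝ) + 1 := by simp
      calc (1 : ℝ) = 1 ^ 3 := by norm_num
        _ ≤ ((n : ℝ) + 1) ^ 3 := by gcongr
    have h2 : (z ^ 2) ^ (n + 1) ≤ (z ^ 2) ^ n := by
      rw [pow_succ]
      exact mul_le_of_le_one_right (pow_nonneg (sq_nonneg z) n) hz2le
    linarith
  have hC : HasSum (fun k : ℕ => z ^ (2 * k + 2) / (2 * (k : ℝ) + 2) ^ 3) (Li3 (z ^ 2) / 8) := by
    have := hg.hasSum.div_const 8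
    rw [Li3]
    convert this using 2 with k
    · rfl
    have hk : ((k : ℝ) + 1) ≠ 0 := by positivity
    rw [← pow_mul]
    field_simp
    ring
  -- D: z^(2k+2)/(2k+3)
  have hD : HasSum (fun k : ℕ => z ^ (2 * k + 2) / (2 * (k : ℝ) + 3)) (((b - a) / 2 - z) / z) := by
    have h2 : HasSum (fun k : ℕ => z ^ (2 * (k + 1) + 1) / (2 * ((k : ℝ) + 1) + 1))
        ((b - a) / 2 - z) := by
      have := (hasSum_nat_add_iff' (f := fun k : ℕ => z ^ (2 * k + 1) / (2 * (k : ℝ) + 1)) 1).2 hodd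
      convert this using 2 with k
      · rfl
      · push_cast; ring_nf
      · simp
    have := h2.div_const z
    convert this using 2 with k
    · rfl
    push_cast
    field_simp
    ring
  -- combine
  have hsum : HasSum
      (fun k : ℕ => z ^ (2 * k + 2) / ((2 * (k : ℝ) + 1) * (2 * k + 2) ^ 3 * (2 * k + 3)))
      ((1 / 2) * (z * ((b - a) / 2)) - (-(Real.log (1 - z ^ 2)) / 2) - Li3 (z ^ 2) / 8
        + (1 / 2) * (((b - a) / 2 - z) / z)) := by
    have H := (((hA.mul_left (1 / 2)).sub hB).sub hC).add (hD.mul_left (1 / 2))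
    convert H using 2 with k
    · rfl
    have h1 : (2 * (k : ℝ) + 1) ≠ 0 := by positivity
    have h2 : (2 * (k : ℝ) + 2) ≠ 0 := by positivity
    have h3 : (2 * (k : ℝ) + 3) ≠ 0 := by positivity
    field_simp
    ring
  rw [hsum.tsum_eq]
  have hlog : Real.log (1 - z ^ 2) = a + b := by
    rw [ha, hb, ← Real.log_mul (by nlinarith) (by nlinarith)]
    ring_nf
  rw [hlog]
  field_simp
  ring
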